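/- arXiv:math/0610757 — 2 statements merged into one kernel-verified Lean document; each statement's English description precedes it below -/
import Mathlib

section
/- Equation (ec122): fix a subset I ⊆ {1,…,p} and a class index k ∈ {1,…,K}. Suppose (i) max_{1≤j≤n} ‖X*_j − Y_j‖ → 0 almost surely as n → ∞, (ii) Assumption 1b holds for I, and (iii) Assumption 2 holds for I. Then (1/n) · #{ 1 ≤ j ≤ n : f_n(X*_j) = k, f_n(Y_j) ≠ k, f_n(X_j) = k } → 0 almost surely as n → ∞. -/
open MeasureTheory ProbabilityTheory Filter Metric
open scoped Topology ENNReal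

private lemma infDist_frontier_le_dist' {E : Type*} [NormedAddCommGroup E] [NormedSpace ℝ E]
    {G : Set E} {x y : E} (hx : x ∈ G) (hy : y ∉ G) :
    Metric.infDist y (frontier G) ≤ dist x y := by
  have hseg : IsPreconnected (segment ℝ y x) := (convex_segment y x).isPreconnected
  obtain ⟨z, hzs, hz1, hz2⟩ :=
    isPreconnected_closed_iff.1 hseg (closure G) (closure Gᶜ) isClosed_closure isClosed_closure
      (by
        intro w _
        by_cases hw : w ∈ G
        · exact Or.inl (subset_closure hw)
        · exact Or.inr (subset_closure hw))
      ⟨x, right_mem_segment ℝ y x, subset_closure hx⟩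
      ⟨y, left_mem_segment ℝ y x, subset_closure hy⟩
  have hzf : z ∈ frontier G := by
    rw [frontier_eq_closure_inter_closure]; exact ⟨hz1, hz2⟩
  have hd : dist y z + dist z x = dist y x := dist_add_dist_of_mem_segment hzs
  calc Metric.infDist y (frontier G) ≤ dist y z := Metric.infDist_le_dist_of_mem hzf
    _ ≤ dist y x := by nlinarith [dist_nonneg (x := z) (y := x)]
    _ = dist x y := dist_comm y x

/-- **Equation (ec122).** Fix a subset `I` of `{1,…,p}` and a class `k`.
If (i) `max_{1≤j≤n} ‖X*_j − Y_j‖ → 0` a.s., (ii) Assumption 1b holds for `I`,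
and (iii) Assumption 2 holds for `I`, then the proportion of indices `j ≤ n`
with `f_n(X*_j) = k`, `f_n(Y_j) ≠ k` and `f_n(X_j) = k` tends to `0` a.s. -/
theorem ec122
    {Ω : Type*} [MeasurableSpace Ω] (μ : Measure Ω) [IsProbabilityMeasure μ]
    (p K : ℕ) (hp : 1 ≤ p) (hK : 1 ≤ K)
    -- the i.i.d. sample, with distribution that of `X 0`
    (X : ℕ → Ω → EuclideanSpace ℝ (Fin p))
    (hXmeas : ∀ j, Measurable (X j))
    (hXindep : iIndepFun X μ)
    (hXident : ∀ j, Measure.map (X j) μ = Measure.map (X 0) μ)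
    (hXint : ∀ i : Fin p, Integrable (fun ω => X 0 ω i) μ)
    -- population and empirical allocation functions
    (f : EuclideanSpace ℝ (Fin p) → Fin K) (hf : Measurable f)
    (fn : ℕ → Ω → EuclideanSpace ℝ (Fin p) → Fin K)
    (hfn : ∀ n ω, Measurable (fn n ω))
    -- the fixed subset of indices and the fixed class
    (I : Finset (Fin p)) (k : Fin K)
    -- population mean-blinded vectors
    (Y : ℕ → Ω → EuclideanSpace ℝ (Fin p))
    (hY : ∀ j ω i, Y j ω i = if i ∈ I then X j ω i else ∫ ω', X 0 ω' i ∂μ)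
    -- empirical mean-blinded vectors
    (Xs : ℕ → ℕ → Ω → EuclideanSpace ℝ (Fin p))
    (hXs : ∀ n j ω i, Xs n j ω i =
      if i ∈ I then X j ω i else (∑ m ∈ Finset.range n, X m ω i) / (n : ℝ))
    -- (i): max_{1 ≤ j ≤ n} ‖X*_j − Y_j‖ → 0 almost surely
    (hmax : ∀ᵐ ω ∂μ, ∀ ε : ℝ, 0 < ε → ∀ᶠ n : ℕ in atTop,
      ∀ j < n, ‖Xs n j ω - Y j ω‖ < ε)
    -- (ii) Assumption 1b for I
    (assump1b : ∀ k' : Fin K, ∀ᵐ ω ∂μ,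
      ∀ j : ℕ, Tendsto
        (fun n => infDist (Y j ω) (frontier ((fn n ω) ⁻¹' {k'})) -
          infDist (Y j ω) (frontier (f ⁻¹' {k'}))) atTop (𝓝 0))
    -- (iii) Assumption 2 for I
    (assump2 : ∀ k' : Fin K,
      Tendsto (fun δ : ℝ => μ {ω | infDist (Y 0 ω) (frontier (f ⁻¹' {k'})) < δ})
        (𝓝[>] 0) (𝓝 0)) :
    ∀ᵐ ω ∂μ,
      Tendsto (fun n : ℕ =>
          (((Finset.range n).filter (fun j => fn n ω (Xs n j ω) = k ∧
            fn n ω (Y j ω) ≠ k ∧ fn n ω (X j ω) = k)).card : ℝ) / (n : ℝ))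
        atTop (𝓝 0) := by
  classical
  -- the blinding map
  set c : Fin p → ℝ := fun i => ∫ ω', X 0 ω' i ∂μ with hc
  set φ : EuclideanSpace ℝ (Fin p) → EuclideanSpace ℝ (Fin p) :=
    fun x => WithLp.toLp 2 (fun i => if i ∈ I then x i else c i) with hφ
  have hφmeas : Measurable φ := by
    refine (WithLp.measurable_toLp 2 (Fin p → ℝ)).comp ?_
    apply measurable_pi_iff.2
    intro i
    by_cases hi : i ∈ I <;> simp only [hi, if_true, if_false]
    · exact (measurable_pi_apply i).comp (WithLp.measurable_ofLp 2 _)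
    · exact measurable_const
  have hYφ : ∀ j ω, Y j ω = φ (X j ω) := by
    intro j ω
    ext i
    rw [hY]
  have hYmeas : ∀ j, Measurable (Y j) := by
    intro j
    have : Y j = φ ∘ X j := funext fun ω => hYφ j ω
    rw [this]
    exact hφmeas.comp (hXmeas j)
  set A : Set (EuclideanSpace ℝ (Fin p)) := frontier (f ⁻¹' {k}) with hA
  have key : ∀ m : ℕ, ∀ᵐ ω ∂μ, ∀ᶠ n : ℕ in atTop,
      (((Finset.range n).filter (fun j => fn n ω (Xs n j ω) = k ∧
        fn n ω (Y j ω) ≠ k ∧ fn n ω (X j ω) = k)).card : ℝ) / (n : ℝ) < 1 / ((m : ℝ) + 1) := by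
    intro m
    set ε : ℝ := 1 / ((m : ℝ) + 1) with hε
    have hεpos : 0 < ε := by positivity
    -- choose δ0 from Assumption 2
    have h2' : ∀ᶠ δ in 𝓝[>] (0 : ℝ),
        μ {ω | infDist (Y 0 ω) A < δ} < ENNReal.ofReal (ε / 4) :=
      (assump2 k).eventually_lt_const (ENNReal.ofReal_pos.2 (by positivity))
    obtain ⟨δ0, hδ0, hδ0mem⟩ := (h2'.and eventually_mem_nhdsWithin).exists
    have hδ0pos : 0 < δ0 := hδ0mem
    -- choose R
    have hRtend : Tendsto (fun R : ℕ => μ {ω | (R : ℝ) < ‖Y 0 ω‖}) atTop (𝓝 0) := by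
      have h0 : (⋂ R : ℕ, {ω | (R : ℝ) < ‖Y 0 ω‖}) = ∅ := by
        ext ω
        simp only [Set.mem_iInter, Set.mem_setOf_eq, Set.mem_empty_iff_false, iff_false,
          not_forall, not_lt]
        obtain ⟨R, hR⟩ := exists_nat_gt ‖Y 0 ω‖
        exact ⟨R, hR.le⟩
      have := tendsto_measure_iInter_atTop (μ := μ)
        (s := fun R : ℕ => {ω | (R : ℝ) < ‖Y 0 ω‖})
        (fun R => (measurableSet_lt measurable_const (hYmeas 0).norm).nullMeasurableSet)
        (fun a b hab ω hω => lt_of_le_of_lt (by exact_mod_cast hab : (a:ℝ) ≤ b) hω)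
        ⟨0, measure_ne_top μ _⟩
      rwa [h0, measure_empty] at this
    obtain ⟨R, hR⟩ :=
      (hRtend.eventually_lt_const (ENNReal.ofReal_pos.2 (by positivity : (0:ℝ) < ε / 4))).exists
    -- the "bad region"
    set B : Set (EuclideanSpace ℝ (Fin p)) :=
      {y | infDist y A < δ0} ∪ {y | (R : ℝ) < ‖y‖} with hB
    have hBmeas : MeasurableSet B :=
      ((isOpen_lt (continuous_infDist_pt A) continuous_const).union
        (isOpen_lt continuous_const continuous_norm)).measurableSet
    -- the indicator variables
    set Z : ℕ → Ω → ℝ := fun j ω => (B.indicator (fun _ => (1 : ℝ)) ∘ φ) (X j ω) with hZ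
    have hZeq : ∀ j ω, Z j ω = B.indicator (fun _ => (1 : ℝ)) (Y j ω) := by
      intro j ω
      rw [hYφ]
      rfl
    have hhmeas : Measurable (B.indicator (fun _ => (1 : ℝ)) ∘ φ) :=
      (measurable_const.indicator hBmeas).comp hφmeas
    have hZ0 : Z 0 = (Y 0 ⁻¹' B).indicator (fun _ => (1 : ℝ)) := by
      funext ω
      rw [hZeq]
      by_cases h : Y 0 ω ∈ B <;>
        simp [Set.indicator_apply, h]
    have hint : Integrable (Z 0) μ := by
      rw [hZ0]
      exact (integrable_const (1 : ℝ)).indicator ((hYmeas 0) hBmeas)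
    have hindep : Pairwise (Function.onFun (IndepFun · · μ) Z) := by
      intro i j hij
      exact (hXindep.indepFun hij).comp hhmeas hhmeas
    have hident : ∀ i, IdentDistrib (Z i) (Z 0) μ μ := by
      intro i
      have base : IdentDistrib (X i) (X 0) μ μ :=
        ⟨(hXmeas i).aemeasurable, (hXmeas 0).aemeasurable, hXident i⟩
      exact base.comp hhmeas
    have hslln := strong_law_ae_real Z hint hindep hident
    -- bound the expectation
    have hEbound : μ[Z 0] < ε / 2 := by
      have hpre : Y 0 ⁻¹' B ⊆ {ω | infDist (Y 0 ω) A < δ0} ∪ {ω | (R : ℝ) < ‖Y 0 ω‖} := by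
        intro ω hω
        exact hω
      have h1 : μ (Y 0 ⁻¹' B) < ENNReal.ofReal (ε / 2) := by
        calc μ (Y 0 ⁻¹' B)
            ≤ μ ({ω | infDist (Y 0 ω) A < δ0} ∪ {ω | (R : ℝ) < ‖Y 0 ω‖}) := measure_mono hpre
          _ ≤ μ {ω | infDist (Y 0 ω) A < δ0} + μ {ω | (R : ℝ) < ‖Y 0 ω‖} := measure_union_le _ _
          _ < ENNReal.ofReal (ε / 4) + ENNReal.ofReal (ε / 4) := ENNReal.add_lt_add hδ0 hR
          _ = ENNReal.ofReal (ε / 2) := by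
              rw [← ENNReal.ofReal_add (by positivity) (by positivity)]
              congr 1
              ring
      have h2 : μ[Z 0] = (μ (Y 0 ⁻¹' B)).toReal := by
        rw [hZ0, integral_indicator_const (1 : ℝ) ((hYmeas 0) hBmeas), smul_eq_mul, mul_one, measureReal_def]
      rw [h2]
      exact ENNReal.toReal_lt_of_lt_ofReal h1
    filter_upwards [hmax, assump1b k, hslln] with ω hωmax hω1b hωslln
    -- events
    have hδ08 : 0 < δ0 / 8 := by positivity
    have E1 := hωmax (δ0 / 8) hδ08
    -- the finite net
    have hTB : TotallyBounded
        ((Set.range fun j => Y j ω) ∩ Metric.closedBall (0 : EuclideanSpace ℝ (Fin p)) R) :=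
      (isCompact_closedBall (0 : EuclideanSpace ℝ (Fin p)) R).totallyBounded.subset
        Set.inter_subset_right
    obtain ⟨t, hts, htfin, hcover⟩ := finite_approx_of_totallyBounded hTB (δ0 / 8) hδ08
    have E2 : ∀ᶠ n : ℕ in atTop, ∀ y ∈ t,
        |infDist y (frontier ((fn n ω) ⁻¹' {k})) - infDist y A| < δ0 / 4 := by
      rw [htfin.eventually_all]
      intro y hyt
      obtain ⟨⟨j, hj⟩, -⟩ := hts hyt
      simp only [] at hj
      have ht := hω1b j
      rw [hj] at ht
      obtain ⟨N, hN⟩ := Metric.tendsto_atTop.1 ht (δ0 / 4) (by positivity)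
      refine eventually_atTop.2 ⟨N, fun n hn => ?_⟩
      have := hN n hn
      rwa [Real.dist_eq, sub_zero] at this
    have E3 : ∀ᶠ n : ℕ in atTop,
        (∑ i ∈ Finset.range n, Z i ω) / (n : ℝ) < ε :=
      hωslln.eventually_lt_const (by linarith)
    filter_upwards [E1, E2, E3, eventually_ge_atTop 1] with n h1 h2 h3 h4
    set bad := (Finset.range n).filter (fun j => fn n ω (Xs n j ω) = k ∧
      fn n ω (Y j ω) ≠ k ∧ fn n ω (X j ω) = k) with hbad
    have hbadB : ∀ j ∈ bad, Y j ω ∈ B := by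
      intro j hj
      rw [hbad, Finset.mem_filter] at hj
      obtain ⟨hjn, hXsk, hYk, -⟩ := hj
      by_cases hRj : ‖Y j ω‖ ≤ R
      · left
        show infDist (Y j ω) A < δ0
        have hx : Xs n j ω ∈ (fn n ω) ⁻¹' {k} := by simp [hXsk]
        have hy : Y j ω ∉ (fn n ω) ⁻¹' {k} := by simp [hYk]
        have h5 : infDist (Y j ω) (frontier ((fn n ω) ⁻¹' {k})) ≤ dist (Xs n j ω) (Y j ω) :=
          infDist_frontier_le_dist' hx hy
        have h6 : dist (Xs n j ω) (Y j ω) < δ0 / 8 := by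
          rw [dist_eq_norm]
          exact h1 j (Finset.mem_range.1 hjn)
        have hmem : Y j ω ∈
            (Set.range fun j => Y j ω) ∩ Metric.closedBall (0 : EuclideanSpace ℝ (Fin p)) R :=
          ⟨⟨j, rfl⟩, by simpa [Metric.mem_closedBall, dist_zero_right] using hRj⟩
        obtain ⟨y, hyt, hyd⟩ := Set.mem_iUnion₂.1 (hcover hmem)
        have h7 := h2 y hyt
        have h8 : dist (Y j ω) y < δ0 / 8 := Metric.mem_ball.1 hyd
        have l1 : infDist (Y j ω) A ≤ infDist y A + dist (Y j ω) y :=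
          infDist_le_infDist_add_dist
        have l2 : infDist y (frontier ((fn n ω) ⁻¹' {k})) ≤
            infDist (Y j ω) (frontier ((fn n ω) ⁻¹' {k})) + dist y (Y j ω) :=
          infDist_le_infDist_add_dist
        have l3 := abs_sub_lt_iff.1 h7
        have hdc : dist y (Y j ω) = dist (Y j ω) y := dist_comm _ _
        linarith [l3.1, l3.2]
      · right
        exact lt_of_not_ge hRj
    have hZone : ∀ j ∈ bad, Z j ω = 1 := by
      intro j hj
      rw [hZeq]
      exact Set.indicator_of_mem (hbadB j hj) _
    have hcard : (bad.card : ℝ) ≤ ∑ i ∈ Finset.range n, Z i ω := by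
      calc (bad.card : ℝ) = ∑ j ∈ bad, Z j ω := by
            rw [Finset.sum_congr rfl hZone, Finset.sum_const, nsmul_eq_mul, mul_one]
        _ ≤ ∑ i ∈ Finset.range n, Z i ω :=
            Finset.sum_le_sum_of_subset_of_nonneg (Finset.filter_subset _ _)
              (fun i _ _ => by
                rw [hZeq]
                exact Set.indicator_nonneg (fun _ _ => zero_le_one) _)
    have hn0 : (0 : ℝ) < n := by exact_mod_cast h4
    calc (bad.card : ℝ) / (n : ℝ) ≤ (∑ i ∈ Finset.range n, Z i ω) / (n : ℝ) := by
          gcongr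
      _ < ε := h3
  have final := ae_all_iff.2 key
  filter_upwards [final] with ω hω
  rw [Metric.tendsto_atTop]
  intro ε hε
  obtain ⟨m, hm⟩ := exists_nat_one_div_lt hε
  obtain ⟨N, hN⟩ := eventually_atTop.1 (hω m)
  refine ⟨N, fun n hn => ?_⟩
  have h := hN n hn
  have hnonneg : (0 : ℝ) ≤
      (((Finset.range n).filter (fun j => fn n ω (Xs n j ω) = k ∧
        fn n ω (Y j ω) ≠ k ∧ fn n ω (X j ω) = k)).card : ℝ) / (n : ℝ) := by positivity
  rw [Real.dist_eq, sub_zero, abs_of_nonneg hnonneg]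
  exact h.trans hm
end

section
/- Equation (ec12): fix a subset I ⊆ {1,…,p} and suppose (i) max_{1≤j≤n} ‖X*_j − Y_j‖ → 0 almost surely as n → ∞, (ii) Assumption 1b holds for I, and (iii) Assumption 2 holds for I. Then for each k ∈ {1,…,K}, (1/n) Σ_{j=1}^n 1{f_n(X_j)=k} · ( 1{f_n(X*_j)=k} − 1{f_n(Y_j)=k} ) → 0 almost surely as n → ∞. -/
open MeasureTheory ProbabilityTheory Filter Metric
open scoped Topology ENNReal

lemma aux_cross {E : Type*} [NormedAddCommGroup E] [NormedSpace ℝ E]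
    {G : Set E} {x y : E} (hx : x ∈ G) (hy : y ∉ G) :
    infDist x (frontier G) ≤ dist x y := by
  by_contra hlt
  push_neg at hlt
  have hr : 0 < infDist x (frontier G) := lt_of_le_of_lt dist_nonneg hlt
  have hball : ball x (infDist x (frontier G)) ⊆ interior G ∪ interior Gᶜ := by
    intro z hz
    by_contra hcon
    rw [Set.mem_union, not_or] at hcon
    have hzf : z ∈ frontier G := by
      rw [frontier_eq_closure_inter_closure]
      refine ⟨?_, ?_⟩
      · rw [closure_eq_compl_interior_compl]
        exact hcon.2
      · rw [closure_compl]
        exact hcon.1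
    have h1 : infDist x (frontier G) ≤ dist x z := infDist_le_dist_of_mem hzf
    rw [mem_ball, dist_comm] at hz
    exact absurd (lt_of_le_of_lt h1 hz) (lt_irrefl _)
  have hdisj : Disjoint (interior G) (interior Gᶜ) :=
    (disjoint_compl_right (a := G)).mono interior_subset interior_subset
  rcases (convex_ball x (infDist x (frontier G))).isPreconnected.subset_or_subset
      isOpen_interior isOpen_interior hdisj hball with h | h
  · exact hy (interior_subset (h (by rw [mem_ball, dist_comm]; exact hlt)))
  · exact (interior_subset (h (mem_ball_self hr))) hx

set_option maxHeartbeats 1000000 in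
/-- **Equation (ec12).** Fix a subset `I` of `{1,…,p}`.
If (i) `max_{1≤j≤n} ‖X*_j − Y_j‖ → 0` a.s., (ii) Assumption 1b holds for `I`,
and (iii) Assumption 2 holds for `I`, then for each class `k`,
`(1/n) Σ_{j=1}^n 1{f_n(X_j)=k}·(1{f_n(X*_j)=k} − 1{f_n(Y_j)=k}) → 0` a.s. -/
theorem ec12
    {Ω : Type*} [MeasurableSpace Ω] (μ : Measure Ω) [IsProbabilityMeasure μ]
    (p K : ℕ) (hp : 1 ≤ p) (hK : 1 ≤ K)
    -- the i.i.d. sample, with distribution that of `X 0`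
    (X : ℕ → Ω → EuclideanSpace ℝ (Fin p))
    (hXmeas : ∀ j, Measurable (X j))
    (hXindep : iIndepFun X μ)
    (hXident : ∀ j, Measure.map (X j) μ = Measure.map (X 0) μ)
    (hXint : ∀ i : Fin p, Integrable (fun ω => X 0 ω i) μ)
    -- population and empirical allocation functions
    (f : EuclideanSpace ℝ (Fin p) → Fin K) (hf : Measurable f)
    (fn : ℕ → Ω → EuclideanSpace ℝ (Fin p) → Fin K)
    (hfn : ∀ n ω, Measurable (fn n ω))
    -- the fixed subset of indices
    (I : Finset (Fin p))
    -- population mean-blinded vectors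
    (Y : ℕ → Ω → EuclideanSpace ℝ (Fin p))
    (hY : ∀ j ω i, Y j ω i = if i ∈ I then X j ω i else ∫ ω', X 0 ω' i ∂μ)
    -- empirical mean-blinded vectors
    (Xs : ℕ → ℕ → Ω → EuclideanSpace ℝ (Fin p))
    (hXs : ∀ n j ω i, Xs n j ω i =
      if i ∈ I then X j ω i else (∑ m ∈ Finset.range n, X m ω i) / (n : ℝ))
    -- (i): max_{1 ≤ j ≤ n} ‖X*_j − Y_j‖ → 0 almost surely
    (hmax : ∀ᵐ ω ∂μ, ∀ ε : ℝ, 0 < ε → ∀ᶠ n : ℕ in atTop,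
      ∀ j < n, ‖Xs n j ω - Y j ω‖ < ε)
    -- (ii) Assumption 1b for I
    (assump1b : ∀ k' : Fin K, ∀ᵐ ω ∂μ,
      ∀ j : ℕ, Tendsto
        (fun n => infDist (Y j ω) (frontier ((fn n ω) ⁻¹' {k'})) -
          infDist (Y j ω) (frontier (f ⁻¹' {k'}))) atTop (𝓝 0))
    -- (iii) Assumption 2 for I
    (assump2 : ∀ k' : Fin K,
      Tendsto (fun δ : ℝ => μ {ω | infDist (Y 0 ω) (frontier (f ⁻¹' {k'})) < δ})
        (𝓝[>] 0) (𝓝 0)) :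
    ∀ k : Fin K, ∀ᵐ ω ∂μ,
      Tendsto (fun n : ℕ => (1 / (n : ℝ)) * ∑ j ∈ Finset.range n,
          (if fn n ω (X j ω) = k then (1 : ℝ) else 0) *
          ((if fn n ω (Xs n j ω) = k then (1 : ℝ) else 0) -
            (if fn n ω (Y j ω) = k then (1 : ℝ) else 0)))
        atTop (𝓝 0) := by
  intro k
  classical
  set F : Set (EuclideanSpace ℝ (Fin p)) := frontier (f ⁻¹' {k}) with hFdef
  -- the blinding map
  obtain ⟨blind, hblinddef, hblind⟩ :
      ∃ b : EuclideanSpace ℝ (Fin p) → EuclideanSpace ℝ (Fin p),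
        (∀ x i, b x i = if i ∈ I then x i else ∫ ω', X 0 ω' i ∂μ) ∧ Measurable b := by
    refine ⟨fun x => (WithLp.toLp 2 (fun i => if i ∈ I then x i else ∫ ω', X 0 ω' i ∂μ) :
        EuclideanSpace ℝ (Fin p)), fun x i => rfl, ?_⟩
    apply (WithLp.measurable_toLp 2 _).comp
    apply measurable_pi_iff.mpr
    intro i
    by_cases h : i ∈ I
    · simpa [h] using (by fun_prop : Measurable fun x : EuclideanSpace ℝ (Fin p) => x.ofLp i)
    · simpa [h] using measurable_const
  have hYeq : ∀ j, Y j = fun ω => blind (X j ω) := by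
    intro j; funext ω; ext i
    rw [hY j ω i, hblinddef]
  have hYmeas : ∀ j, Measurable (Y j) := by
    intro j; rw [hYeq j]; exact hblind.comp (hXmeas j)
  have hYmap : ∀ j, Measure.map (Y j) μ = Measure.map (Y 0) μ := by
    intro j
    rw [hYeq j, hYeq 0]
    show Measure.map (blind ∘ X j) μ = Measure.map (blind ∘ X 0) μ
    rw [← Measure.map_map hblind (hXmeas j), ← Measure.map_map hblind (hXmeas 0), hXident j]
  -- strong law of large numbers for indicators of Borel sets applied to the Y's
  have slln : ∀ A : Set (EuclideanSpace ℝ (Fin p)), MeasurableSet A →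
      ∀ᵐ ω ∂μ, Tendsto (fun n : ℕ =>
        (∑ j ∈ Finset.range n, A.indicator (fun _ => (1:ℝ)) (Y j ω)) / n) atTop
        (𝓝 ((μ ((Y 0) ⁻¹' A)).toReal)) := by
    intro A hA
    obtain ⟨g, hgdef, hgmeas⟩ : ∃ g : EuclideanSpace ℝ (Fin p) → ℝ,
        g = (fun x => if blind x ∈ A then (1:ℝ) else 0) ∧ Measurable g :=
      ⟨_, rfl, Measurable.ite (hblind hA) measurable_const measurable_const⟩
    have hZY : ∀ j ω, (g ∘ X j) ω = A.indicator (fun _ => (1:ℝ)) (Y j ω) := by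
      intro j ω
      rw [hgdef, hYeq j]
      show (if blind (X j ω) ∈ A then (1:ℝ) else 0) =
        A.indicator (fun _ => (1:ℝ)) (blind (X j ω))
      by_cases h : blind (X j ω) ∈ A
      · rw [if_pos h, Set.indicator_of_mem h]
      · rw [if_neg h, Set.indicator_of_notMem h]
    have hZind : (g ∘ X 0) = Set.indicator ((Y 0) ⁻¹' A) (fun _ => (1:ℝ)) := by
      funext ω
      rw [hZY 0 ω]
      by_cases h : Y 0 ω ∈ A
      · rw [Set.indicator_of_mem h]
        exact (Set.indicator_of_mem (show ω ∈ (Y 0) ⁻¹' A from h) (fun _ => (1:ℝ))).symm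
      · rw [Set.indicator_of_notMem h]
        exact (Set.indicator_of_notMem (show ω ∉ (Y 0) ⁻¹' A from h) (fun _ => (1:ℝ))).symm
    have hint : Integrable (g ∘ X 0) μ := by
      rw [hZind]
      exact (integrable_const (1:ℝ)).indicator ((hYmeas 0) hA)
    have hpair : Pairwise (Function.onFun (IndepFun · · μ) (fun j => g ∘ X j)) := by
      intro i j hij
      exact (hXindep.comp (fun _ => g) (fun _ => hgmeas)).indepFun hij
    have hident : ∀ j, IdentDistrib (g ∘ X j) (g ∘ X 0) μ μ := by
      intro j
      refine ⟨(hgmeas.comp (hXmeas j)).aemeasurable, (hgmeas.comp (hXmeas 0)).aemeasurable, ?_⟩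
      show Measure.map (g ∘ X j) μ = Measure.map (g ∘ X 0) μ
      rw [← Measure.map_map hgmeas (hXmeas j), ← Measure.map_map hgmeas (hXmeas 0), hXident j]
    have hEZ : (μ[g ∘ X 0]) = (μ ((Y 0) ⁻¹' A)).toReal := by
      rw [hZind]
      exact integral_indicator_one ((hYmeas 0) hA)
    have hSL := strong_law_ae_real (fun j => g ∘ X j) hint hpair hident
    rw [hEZ] at hSL
    filter_upwards [hSL] with ω hω
    refine Tendsto.congr (fun n => ?_) hω
    congr 1
    exact Finset.sum_congr rfl fun j _ => hZY j ω
  -- deterministic choices of δ, R, and the finite covers, for each accuracy level m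
  have hchoice : ∀ m : ℕ, ∃ δ : ℝ, 0 < δ ∧
      (μ ((Y 0) ⁻¹' {y | infDist y F < δ})).toReal < 1/((m:ℝ)+1) ∧
      ∃ R : ℝ,
        (μ ((Y 0) ⁻¹' (closedBall (0:EuclideanSpace ℝ (Fin p)) R)ᶜ)).toReal < 1/((m:ℝ)+1) ∧
        ∃ t : Finset (EuclideanSpace ℝ (Fin p)),
          closedBall (0:EuclideanSpace ℝ (Fin p)) R ⊆ ⋃ x ∈ t, ball x (δ/8) := by
    intro m
    have hεpos : (0:ℝ) < 1/((m:ℝ)+1) := by positivity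
    have hεpos' : (0:ℝ≥0∞) < ENNReal.ofReal (1/((m:ℝ)+1)) := ENNReal.ofReal_pos.mpr hεpos
    -- choice of δ
    obtain ⟨δ, hδpos, hδlt⟩ : ∃ δ : ℝ, 0 < δ ∧
        μ {ω | infDist (Y 0 ω) F < δ} < ENNReal.ofReal (1/((m:ℝ)+1)) := by
      have h2 := ((assump2 k).eventually_lt_const hεpos').and eventually_mem_nhdsWithin
      obtain ⟨δ, h, hmem⟩ := h2.exists
      exact ⟨δ, hmem, h⟩
    -- choice of R
    obtain ⟨R, hRlt⟩ : ∃ R : ℕ,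
        μ ((Y 0) ⁻¹' (closedBall (0:EuclideanSpace ℝ (Fin p)) (R:ℝ))ᶜ) <
          ENNReal.ofReal (1/((m:ℝ)+1)) := by
      have hiter := tendsto_measure_iInter_atTop
        (s := fun R : ℕ => (Y 0) ⁻¹' (closedBall (0:EuclideanSpace ℝ (Fin p)) (R:ℝ))ᶜ)
        (μ := μ)
        (fun R => ((hYmeas 0) measurableSet_closedBall.compl).nullMeasurableSet)
        (fun a b hab => Set.preimage_mono (Set.compl_subset_compl.mpr
          (closedBall_subset_closedBall (by exact_mod_cast hab))))
        ⟨0, measure_ne_top μ _⟩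
      have hempty : (⋂ R : ℕ, (Y 0) ⁻¹' (closedBall (0:EuclideanSpace ℝ (Fin p)) (R:ℝ))ᶜ) = ∅ := by
        rw [Set.eq_empty_iff_forall_notMem]
        intro ω hω
        obtain ⟨R, hR⟩ := exists_nat_ge ‖Y 0 ω‖
        exact (Set.mem_iInter.mp hω R) (mem_closedBall_zero_iff.mpr hR)
      rw [hempty, measure_empty] at hiter
      exact (hiter.eventually_lt_const hεpos').exists
    -- choice of the cover
    obtain ⟨t, ht⟩ := (isCompact_closedBall (0:EuclideanSpace ℝ (Fin p)) (R:ℝ)).elim_finite_subcover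
      (fun x : EuclideanSpace ℝ (Fin p) => ball x (δ/8)) (fun x => isOpen_ball)
      (fun y _ => Set.mem_iUnion.mpr ⟨y, mem_ball_self (by positivity)⟩)
    refine ⟨δ, hδpos, ?_, (R:ℝ), ?_, t, ht⟩
    · have := ENNReal.toReal_lt_toReal (measure_ne_top μ _) ENNReal.ofReal_ne_top |>.mpr hδlt
      rwa [ENNReal.toReal_ofReal hεpos.le] at this
    · have := ENNReal.toReal_lt_toReal (measure_ne_top μ _) ENNReal.ofReal_ne_top |>.mpr hRlt
      rwa [ENNReal.toReal_ofReal hεpos.le] at this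
  choose δ hδpos hδμ R hRμ t ht using hchoice
  -- the almost sure events
  have hA1 : ∀ᵐ ω ∂μ, ∀ m : ℕ, Tendsto (fun n : ℕ =>
      (∑ j ∈ Finset.range n, Set.indicator {y | infDist y F < δ m} (fun _ => (1:ℝ)) (Y j ω)) / n)
      atTop (𝓝 ((μ ((Y 0) ⁻¹' {y | infDist y F < δ m})).toReal)) := by
    rw [ae_all_iff]
    intro m
    exact slln {y | infDist y F < δ m}
      ((isOpen_lt (continuous_infDist_pt F) continuous_const).measurableSet)
  have hA2 : ∀ᵐ ω ∂μ, ∀ m : ℕ, Tendsto (fun n : ℕ =>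
      (∑ j ∈ Finset.range n,
        Set.indicator (closedBall (0:EuclideanSpace ℝ (Fin p)) (R m))ᶜ (fun _ => (1:ℝ)) (Y j ω)) / n)
      atTop (𝓝 ((μ ((Y 0) ⁻¹' (closedBall (0:EuclideanSpace ℝ (Fin p)) (R m))ᶜ)).toReal)) := by
    rw [ae_all_iff]
    intro m
    exact slln (closedBall (0:EuclideanSpace ℝ (Fin p)) (R m))ᶜ measurableSet_closedBall.compl
  have hA3 : ∀ᵐ ω ∂μ, ∀ m : ℕ, ∀ x ∈ t m,
      (μ ((Y 0) ⁻¹' ball x (δ m / 8)) ≠ 0 → ∃ j, Y j ω ∈ ball x (δ m / 8)) ∧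
      (μ ((Y 0) ⁻¹' ball x (δ m / 8)) = 0 → ∀ j, Y j ω ∉ ball x (δ m / 8)) := by
    rw [ae_all_iff]
    intro m
    rw [Filter.eventually_all_finset]
    intro x hx
    by_cases hb : μ ((Y 0) ⁻¹' ball x (δ m / 8)) = 0
    · have hnull : ∀ j : ℕ, μ ((Y j) ⁻¹' ball x (δ m / 8)) = 0 := by
        intro j
        have hmm : Measure.map (Y j) μ (ball x (δ m / 8)) =
            Measure.map (Y 0) μ (ball x (δ m / 8)) := by rw [hYmap j]
        rwa [Measure.map_apply (hYmeas j) measurableSet_ball,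
          Measure.map_apply (hYmeas 0) measurableSet_ball, hb] at hmm
      have hae : ∀ᵐ ω ∂μ, ∀ j : ℕ, Y j ω ∉ ball x (δ m / 8) :=
        ae_all_iff.mpr fun j => measure_eq_zero_iff_ae_notMem.mp (hnull j)
      filter_upwards [hae] with ω hω
      exact ⟨fun h => absurd hb h, fun _ => hω⟩
    · have hpos : 0 < (μ ((Y 0) ⁻¹' ball x (δ m / 8))).toReal :=
        ENNReal.toReal_pos hb (measure_ne_top μ _)
      filter_upwards [slln (ball x (δ m / 8)) measurableSet_ball] with ω hω
      refine ⟨fun _ => ?_, fun h => absurd h hb⟩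
      by_contra hno
      push_neg at hno
      have hz : (fun n : ℕ => (∑ j ∈ Finset.range n,
          Set.indicator (ball x (δ m / 8)) (fun _ => (1:ℝ)) (Y j ω)) / n) = fun _ => (0:ℝ) := by
        funext n
        rw [Finset.sum_eq_zero, zero_div]
        intro j _
        rw [Set.indicator_of_notMem (hno j)]
      rw [hz] at hω
      exact hpos.ne' (tendsto_nhds_unique hω tendsto_const_nhds)
  -- the main argument, pointwise in ω
  filter_upwards [hmax, assump1b k, hA1, hA2, hA3] with ω hωmax hω1b hωA1 hωA2 hωA3
  rw [NormedAddCommGroup.tendsto_nhds_zero]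
  intro ε hε
  obtain ⟨m, hm⟩ := exists_nat_one_div_lt (show (0:ℝ) < ε/2 by linarith)
  have hδm : 0 < δ m := hδpos m
  -- uniform lower bound on the distance to the empirical frontier
  have key0 : ∀ x ∈ t m, ∀ᶠ n : ℕ in atTop, ∀ j : ℕ,
      Y j ω ∈ ball x (δ m / 8) → δ m ≤ infDist (Y j ω) F →
      δ m / 4 ≤ infDist (Y j ω) (frontier ((fn n ω) ⁻¹' {k})) := by
    intro x hx
    by_cases hb : μ ((Y 0) ⁻¹' ball x (δ m / 8)) = 0
    · filter_upwards with n j hj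
      exact absurd hj ((hωA3 m x hx).2 hb j)
    · obtain ⟨j₀, hj₀⟩ := (hωA3 m x hx).1 hb
      have hev : ∀ᶠ n : ℕ in atTop,
          |infDist (Y j₀ ω) (frontier ((fn n ω) ⁻¹' {k})) - infDist (Y j₀ ω) F| < δ m / 4 := by
        filter_upwards [Metric.tendsto_nhds.mp (hω1b j₀) (δ m / 4) (by positivity)] with n hn
        rwa [Real.dist_eq, sub_zero] at hn
      filter_upwards [hev] with n hn j hj hdj
      have hd1 : dist (Y j ω) (Y j₀ ω) < δ m / 4 := by
        have htr := dist_triangle_right (Y j ω) (Y j₀ ω) x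
        rw [mem_ball] at hj hj₀
        linarith
      have h2 : infDist (Y j ω) F ≤ infDist (Y j₀ ω) F + dist (Y j ω) (Y j₀ ω) :=
        infDist_le_infDist_add_dist
      have h3 : infDist (Y j₀ ω) (frontier ((fn n ω) ⁻¹' {k})) ≤
          infDist (Y j ω) (frontier ((fn n ω) ⁻¹' {k})) + dist (Y j₀ ω) (Y j ω) :=
        infDist_le_infDist_add_dist
      have h4 := abs_lt.mp hn
      rw [dist_comm] at h3
      linarith [h4.1, h4.2]
  have key : ∀ᶠ n : ℕ in atTop, ∀ j : ℕ,
      Y j ω ∈ closedBall (0:EuclideanSpace ℝ (Fin p)) (R m) → δ m ≤ infDist (Y j ω) F →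
      δ m / 4 ≤ infDist (Y j ω) (frontier ((fn n ω) ⁻¹' {k})) := by
    filter_upwards [(Filter.eventually_all_finset (t m)).mpr key0] with n hn j hjB hjF
    obtain ⟨x, hx, hxb⟩ := Set.mem_iUnion₂.mp (ht m hjB)
    exact hn x hx j hxb hjF
  have hev0 := hωmax (δ m / 4) (by positivity)
  have hev1 := (hωA1 m).eventually_lt_const (hδμ m)
  have hev2 := (hωA2 m).eventually_lt_const (hRμ m)
  filter_upwards [key, hev0, hev1, hev2] with n hkey hmaxn hav1 hav2
  rw [Real.norm_eq_abs]
  -- termwise bound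
  have hbound : ∀ j ∈ Finset.range n,
      |(if fn n ω (X j ω) = k then (1:ℝ) else 0) *
        ((if fn n ω (Xs n j ω) = k then (1:ℝ) else 0) -
          (if fn n ω (Y j ω) = k then (1:ℝ) else 0))| ≤
      (Set.indicator (closedBall (0:EuclideanSpace ℝ (Fin p)) (R m))ᶜ (fun _ => (1:ℝ)) (Y j ω) +
       Set.indicator {y | infDist y F < δ m} (fun _ => (1:ℝ)) (Y j ω)) := by
    intro j hj
    rw [Finset.mem_range] at hj
    by_cases hiff : (fn n ω (Xs n j ω) = k) ↔ (fn n ω (Y j ω) = k)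
    · rw [if_congr hiff rfl rfl, sub_self, mul_zero, abs_zero]
      have h0a : (0:ℝ) ≤ Set.indicator (closedBall (0:EuclideanSpace ℝ (Fin p)) (R m))ᶜ
          (fun _ => (1:ℝ)) (Y j ω) := Set.indicator_nonneg (fun _ _ => zero_le_one) _
      have h0b : (0:ℝ) ≤ Set.indicator {y | infDist y F < δ m}
          (fun _ => (1:ℝ)) (Y j ω) := Set.indicator_nonneg (fun _ _ => zero_le_one) _
      linarith
    · have hcross : infDist (Y j ω) (frontier ((fn n ω) ⁻¹' {k})) ≤
          dist (Y j ω) (Xs n j ω) := by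
        rw [not_iff] at hiff
        by_cases hq : fn n ω (Y j ω) = k
        · have hp : ¬ fn n ω (Xs n j ω) = k := hiff.mpr hq
          have hYG : Y j ω ∈ (fn n ω) ⁻¹' {k} := by simp [hq]
          have hXG : Xs n j ω ∉ (fn n ω) ⁻¹' {k} := by simp [hp]
          exact aux_cross hYG hXG
        · have hp : fn n ω (Xs n j ω) = k := not_not.mp (fun hnp => hq (hiff.mp hnp))
          have hYG : Y j ω ∈ ((fn n ω) ⁻¹' {k})ᶜ := by simp [hq]
          have hXG : Xs n j ω ∉ ((fn n ω) ⁻¹' {k})ᶜ := by simp [hp]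
          have := aux_cross hYG hXG
          rwa [frontier_compl] at this
      have hdist : dist (Y j ω) (Xs n j ω) < δ m / 4 := by
        rw [dist_eq_norm, ← norm_neg, neg_sub]
        exact hmaxn j hj
      have hsmall : infDist (Y j ω) (frontier ((fn n ω) ⁻¹' {k})) < δ m / 4 :=
        lt_of_le_of_lt hcross hdist
      have hcase : Y j ω ∉ closedBall (0:EuclideanSpace ℝ (Fin p)) (R m) ∨
          infDist (Y j ω) F < δ m := by
        by_contra hcon
        push_neg at hcon
        exact absurd hsmall (not_lt.mpr (hkey j hcon.1 hcon.2))
      have habs : |(if fn n ω (X j ω) = k then (1:ℝ) else 0) *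
          ((if fn n ω (Xs n j ω) = k then (1:ℝ) else 0) -
            (if fn n ω (Y j ω) = k then (1:ℝ) else 0))| ≤ 1 := by
        split_ifs <;> norm_num
      rcases hcase with h | h
      · rw [Set.indicator_of_mem (Set.mem_compl h)]
        have h0 : (0:ℝ) ≤ Set.indicator {y | infDist y F < δ m}
            (fun _ => (1:ℝ)) (Y j ω) := Set.indicator_nonneg (fun _ _ => zero_le_one) _
        linarith
      · rw [Set.indicator_of_mem (show Y j ω ∈ {y | infDist y F < δ m} from h)]
        have h0 : (0:ℝ) ≤ Set.indicator (closedBall (0:EuclideanSpace ℝ (Fin p)) (R m))ᶜ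
            (fun _ => (1:ℝ)) (Y j ω) := Set.indicator_nonneg (fun _ _ => zero_le_one) _
        linarith
  have hsum : |∑ j ∈ Finset.range n,
      (if fn n ω (X j ω) = k then (1:ℝ) else 0) *
        ((if fn n ω (Xs n j ω) = k then (1:ℝ) else 0) -
          (if fn n ω (Y j ω) = k then (1:ℝ) else 0))| ≤
      (∑ j ∈ Finset.range n,
        Set.indicator (closedBall (0:EuclideanSpace ℝ (Fin p)) (R m))ᶜ (fun _ => (1:ℝ)) (Y j ω)) +
      (∑ j ∈ Finset.range n,
        Set.indicator {y | infDist y F < δ m} (fun _ => (1:ℝ)) (Y j ω)) := by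
    calc |∑ j ∈ Finset.range n, _| ≤ ∑ j ∈ Finset.range n, |(if fn n ω (X j ω) = k then (1:ℝ) else 0) *
        ((if fn n ω (Xs n j ω) = k then (1:ℝ) else 0) -
          (if fn n ω (Y j ω) = k then (1:ℝ) else 0))| := Finset.abs_sum_le_sum_abs _ _
    _ ≤ ∑ j ∈ Finset.range n,
        (Set.indicator (closedBall (0:EuclideanSpace ℝ (Fin p)) (R m))ᶜ (fun _ => (1:ℝ)) (Y j ω) +
         Set.indicator {y | infDist y F < δ m} (fun _ => (1:ℝ)) (Y j ω)) := Finset.sum_le_sum hbound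
    _ = _ := Finset.sum_add_distrib
  have hnn : (0:ℝ) ≤ 1/(n:ℝ) := by positivity
  rw [abs_mul, abs_of_nonneg hnn]
  have h5 := mul_le_mul_of_nonneg_left hsum hnn
  have h6 : 1/(n:ℝ) * ((∑ j ∈ Finset.range n,
      Set.indicator (closedBall (0:EuclideanSpace ℝ (Fin p)) (R m))ᶜ (fun _ => (1:ℝ)) (Y j ω)) +
      (∑ j ∈ Finset.range n, Set.indicator {y | infDist y F < δ m} (fun _ => (1:ℝ)) (Y j ω))) =
      (∑ j ∈ Finset.range n,
        Set.indicator (closedBall (0:EuclideanSpace ℝ (Fin p)) (R m))ᶜ (fun _ => (1:ℝ)) (Y j ω)) / n +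
      (∑ j ∈ Finset.range n,
        Set.indicator {y | infDist y F < δ m} (fun _ => (1:ℝ)) (Y j ω)) / n := by
    ring
  rw [h6] at h5
  calc 1/(n:ℝ) * |∑ j ∈ Finset.range n,
      (if fn n ω (X j ω) = k then (1:ℝ) else 0) *
        ((if fn n ω (Xs n j ω) = k then (1:ℝ) else 0) -
          (if fn n ω (Y j ω) = k then (1:ℝ) else 0))| ≤ _ := h5
  _ < ε := by linarith
end
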